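/- For the anyonic kernel with q an N-th root of unity (q ≠ 1), for points t_1 < t_2 < ··· < t_n one has f^{⊛n}(t_1,...,t_n) = ([n]_q!/n!) f(t_1)···f(t_n), where [n]_q! = [n]_q [n-1]_q ··· [1]_q and [k]_q = 1 + q + ··· + q^{k-1}. -/

import Mathlib

/-- `Q_π(t_1,…,t_n) = ∏_{i<j, π(i)>π(j)} Q(t_i,t_j)`. -/
def Qpi {T : Type*} (Q : T → T → ℂ) {n : ℕ} (π : Equiv.Perm (Fin n)) (t : Fin n → T) : ℂ :=
  ∏ p ∈ Finset.univ.filter (fun p : Fin n × Fin n => p.1 < p.2 ∧ π p.2 < π p.1),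
    Q (t p.1) (t p.2)

/-- The `Q`-symmetrization `P_n f = (1/n!) Σ_π Q_π(t) f(t∘π⁻¹)`. -/
noncomputable def Psym {T : Type*} (Q : T → T → ℂ) {n : ℕ} (f : (Fin n → T) → ℂ) :
    (Fin n → T) → ℂ :=
  fun t => ((n.factorial : ℂ))⁻¹ * ∑ π : Equiv.Perm (Fin n), Qpi Q π t * f (t ∘ ⇑π⁻¹)

/-- The anyonic kernel: `Q(s,t) = q` if `s < t`, `q̄` if `t < s`. -/
noncomputable def anyonQ {T : Type*} [LinearOrder T] (q : ℂ) : T → T → ℂ :=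
  fun s t => if s < t then q else if t < s then (starRingEnd ℂ) q else 1

/-- The number of inversions of a permutation of `Fin n`. -/
def invCount {n : ℕ} (π : Equiv.Perm (Fin n)) : ℕ :=
  (Finset.univ.filter (fun p : Fin n × Fin n => p.1 < p.2 ∧ π p.2 < π p.1)).card

/-- Insertion function: put the value `last n` at position `j`, the rest in order of `σ`. -/
def insFun {n : ℕ} (j : Fin (n + 1)) (σ : Equiv.Perm (Fin n)) : Fin (n + 1) → Fin (n + 1) :=
  j.insertNth (Fin.last n) (Fin.castSucc ∘ σ)

lemma insFun_bijective {n : ℕ} (j : Fin (n + 1)) (σ : Equiv.Perm (Fin n)) :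
    Function.Bijective (insFun j σ) := by
  rw [Fintype.bijective_iff_injective_and_card]
  refine ⟨?_, rfl⟩
  intro x y h
  rcases eq_or_ne x j with hx | hx <;> rcases eq_or_ne y j with hy | hy
  · rw [hx, hy]
  · obtain ⟨b, hb⟩ := Fin.exists_succAbove_eq hy
    rw [hx, ← hb, insFun, Fin.insertNth_apply_same, Fin.insertNth_apply_succAbove] at h
    exact absurd h.symm (Fin.castSucc_lt_last _).ne
  · obtain ⟨a, ha⟩ := Fin.exists_succAbove_eq hx
    rw [hy, ← ha, insFun, Fin.insertNth_apply_same, Fin.insertNth_apply_succAbove] at h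
    exact absurd h (Fin.castSucc_lt_last _).ne
  · obtain ⟨a, ha⟩ := Fin.exists_succAbove_eq hx
    obtain ⟨b, hb⟩ := Fin.exists_succAbove_eq hy
    rw [← ha, ← hb, insFun, Fin.insertNth_apply_succAbove, Fin.insertNth_apply_succAbove] at h
    simp only [Function.comp_apply, Fin.castSucc_inj] at h
    rw [← ha, ← hb, σ.injective h]

/-- The insertion permutation. -/
noncomputable def insPerm {n : ℕ} (j : Fin (n + 1)) (σ : Equiv.Perm (Fin n)) : Equiv.Perm (Fin (n + 1)) :=
  Equiv.ofBijective _ (insFun_bijective j σ)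

lemma insPerm_apply {n : ℕ} (j : Fin (n + 1)) (σ : Equiv.Perm (Fin n)) (x : Fin (n + 1)) :
    insPerm j σ x = insFun j σ x := rfl

lemma insPerm_injective {n : ℕ} :
    Function.Injective (fun p : Fin (n + 1) × Equiv.Perm (Fin n) => insPerm p.1 p.2) := by
  rintro ⟨j, σ⟩ ⟨j', σ'⟩ h
  simp only at h
  have hval : ∀ x, insFun j σ x = insFun j' σ' x := fun x => by
    rw [← insPerm_apply, ← insPerm_apply, h]
  have hj : j = j' := by
    by_contra hne
    obtain ⟨b, hb⟩ := Fin.exists_succAbove_eq hne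
    have := hval j
    rw [insFun, insFun, Fin.insertNth_apply_same, ← hb, Fin.insertNth_apply_succAbove] at this
    exact absurd this.symm (Fin.castSucc_lt_last _).ne
  subst hj
  have hσ : σ = σ' := by
    ext a
    have := hval (j.succAbove a)
    rw [insFun, insFun, Fin.insertNth_apply_succAbove, Fin.insertNth_apply_succAbove] at this
    have h2 : σ a = σ' a := by simpa using this
    exact congrArg Fin.val h2
  rw [hσ]

lemma insPerm_bijective {n : ℕ} :
    Function.Bijective (fun p : Fin (n + 1) × Equiv.Perm (Fin n) => insPerm p.1 p.2) := by
  rw [Fintype.bijective_iff_injective_and_card]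
  refine ⟨insPerm_injective, ?_⟩
  simp [Fintype.card_perm, Nat.factorial_succ]

lemma invCount_insPerm {n : ℕ} (j : Fin (n + 1)) (σ : Equiv.Perm (Fin n)) :
    invCount (insPerm j σ) = (n - (j : ℕ)) + invCount σ := by
  classical
  have hset :
      (Finset.univ.filter (fun p : Fin (n + 1) × Fin (n + 1) =>
          p.1 < p.2 ∧ insPerm j σ p.2 < insPerm j σ p.1))
        = ({j} ×ˢ Finset.Ioi j) ∪
          ((Finset.univ.filter (fun p : Fin n × Fin n => p.1 < p.2 ∧ σ p.2 < σ p.1)).image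
            (fun p => (j.succAbove p.1, j.succAbove p.2))) := by
    ext ⟨x, y⟩
    simp only [Finset.mem_filter, Finset.mem_univ, true_and, Finset.mem_union,
      Finset.mem_product, Finset.mem_singleton, Finset.mem_Ioi, Finset.mem_image, Prod.mk.injEq,
      Prod.exists]
    constructor
    · rintro ⟨hxy, hlt⟩
      rcases eq_or_ne x j with hx | hx
      · exact Or.inl ⟨hx, hx ▸ hxy⟩
      · rcases eq_or_ne y j with hy | hy
        · exfalso
          rw [hy, insPerm_apply, insFun, Fin.insertNth_apply_same] at hlt
          exact absurd hlt (not_lt.mpr (Fin.le_last _))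
        · obtain ⟨a, ha⟩ := Fin.exists_succAbove_eq hx
          obtain ⟨b, hb⟩ := Fin.exists_succAbove_eq hy
          refine Or.inr ⟨a, b, ⟨?_, ?_⟩, ha, hb⟩
          · rw [← Fin.succAbove_lt_succAbove_iff (p := j), ha, hb]; exact hxy
          · rw [← ha, ← hb, insPerm_apply, insPerm_apply, insFun,
              Fin.insertNth_apply_succAbove, Fin.insertNth_apply_succAbove] at hlt
            simpa using hlt
    · rintro (⟨hx, hy⟩ | ⟨a, b, ⟨hab, hσ⟩, ha, hb⟩)
      · subst hx
        have hy' : y ≠ x := hy.ne'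
        obtain ⟨b, hb⟩ := Fin.exists_succAbove_eq hy'
        refine ⟨hy, ?_⟩
        rw [← hb, insPerm_apply, insPerm_apply, insFun, Fin.insertNth_apply_same,
          Fin.insertNth_apply_succAbove]
        exact Fin.castSucc_lt_last _
      · subst ha; subst hb
        refine ⟨Fin.succAbove_lt_succAbove_iff.mpr hab, ?_⟩
        rw [insPerm_apply, insPerm_apply, insFun, Fin.insertNth_apply_succAbove,
          Fin.insertNth_apply_succAbove]
        simpa using hσ
  have hdisj : Disjoint ({j} ×ˢ Finset.Ioi j)
      ((Finset.univ.filter (fun p : Fin n × Fin n => p.1 < p.2 ∧ σ p.2 < σ p.1)).image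
        (fun p => (j.succAbove p.1, j.succAbove p.2))) := by
    rw [Finset.disjoint_left]
    rintro ⟨x, y⟩ hmem hmem'
    simp only [Finset.mem_product, Finset.mem_singleton, Finset.mem_Ioi] at hmem
    simp only [Finset.mem_image, Prod.mk.injEq, Prod.exists] at hmem'
    obtain ⟨a, b, _, ha, _⟩ := hmem'
    exact Fin.succAbove_ne j a (ha.trans hmem.1)
  rw [invCount, hset, Finset.card_union_of_disjoint hdisj]
  congr 1
  · rw [Finset.card_product, Finset.card_singleton, Fin.card_Ioi, one_mul]
    simp
  · rw [invCount, Finset.card_image_of_injective]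
    intro p p' h
    simp only [Prod.mk.injEq] at h
    exact Prod.ext (Fin.succAbove_right_injective h.1) (Fin.succAbove_right_injective h.2)

lemma sum_q_invCount (q : ℂ) : ∀ n : ℕ,
    ∑ π : Equiv.Perm (Fin n), q ^ invCount π
      = ∏ k ∈ Finset.range n, ∑ i ∈ Finset.range (k + 1), q ^ i := by
  intro n
  induction n with
  | zero =>
    simp [invCount]
  | succ n ih =>
    rw [← Fintype.sum_bijective _ insPerm_bijective
      (fun p : Fin (n + 1) × Equiv.Perm (Fin n) => q ^ invCount (insPerm p.1 p.2))
      (fun π => q ^ invCount π) (fun _ => rfl)]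
    have : ∀ p : Fin (n + 1) × Equiv.Perm (Fin n),
        q ^ invCount (insPerm p.1 p.2) = q ^ (n - (p.1 : ℕ)) * q ^ invCount p.2 := by
      intro p; rw [invCount_insPerm, pow_add]
    rw [Fintype.sum_congr _ _ this, Fintype.sum_prod_type]
    simp only [← Finset.mul_sum]
    rw [← Finset.sum_mul, ih, Finset.prod_range_succ]
    have hsum : ∑ j : Fin (n + 1), q ^ (n - (j : ℕ)) = ∑ i ∈ Finset.range (n + 1), q ^ i := by
      rw [Fin.sum_univ_eq_sum_range (fun i => q ^ (n - i)) (n + 1)]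
      have := Finset.sum_range_reflect (fun i => q ^ i) (n + 1)
      simpa using this
    rw [hsum]
    ring

lemma Qpi_anyon {T : Type*} [LinearOrder T] (q : ℂ) {n : ℕ} (π : Equiv.Perm (Fin n))
    (t : Fin n → T) (ht : StrictMono t) :
    Qpi (anyonQ q) π t = q ^ invCount π := by
  rw [Qpi, invCount, ← Finset.prod_const]
  refine Finset.prod_congr rfl ?_
  intro p hp
  simp only [Finset.mem_filter] at hp
  rw [anyonQ, if_pos (ht hp.2.1)]

theorem anyon_symmetric_power_on_ordered_tuples {T : Type*} [LinearOrder T]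
    (q : ℂ) (hq : ‖q‖ = 1) (hq1 : q ≠ 1)
    (N : ℕ) (hqN : q ^ N = 1)
    (f : T → ℂ) (n : ℕ) (t : Fin n → T) (ht : StrictMono t) :
    Psym (anyonQ q) (fun s => ∏ i, f (s i)) t
      = ((∏ k ∈ Finset.range n, ∑ i ∈ Finset.range (k + 1), q ^ i) / (n.factorial : ℂ)) *
          ∏ i, f (t i) := by
  rw [Psym]
  have hterm : ∀ π : Equiv.Perm (Fin n),
      Qpi (anyonQ q) π t * (∏ i, f ((t ∘ ⇑π⁻¹) i)) = q ^ invCount π * ∏ i, f (t i) := by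
    intro π
    rw [Qpi_anyon q π t ht]
    congr 1
    exact Equiv.prod_comp π⁻¹ (fun i => f (t i))
  simp only [hterm]
  rw [← Finset.sum_mul, sum_q_invCount]
  ring
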